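/- Let H be a topologically free Hopf algebra over k[[h]] (k a field) and define H' := { a ∈ H : δ_n(a) ∈ hⁿ H^{⊗n} for all n ∈ ℕ }. Then H' is a k[[h]]-subalgebra of H containing 1. -/

import Mathlib

/- STATEMENT 5: Let H be a topologically free Hopf algebra over k[[h]] (k a
field) and define H' := { a ∈ H : δ_n(a) ∈ hⁿ H^{⊗n} for all n ∈ ℕ }. Then H'
is a k[[h]]-subalgebra of H containing 1.
Topological freeness is encoded, following the criterion quoted in the paper
([KT], §4.1), as: H is h-torsionless, h-adically complete and separated. -/

open TensorProduct

noncomputable section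

universe u

/-- A bundled `R`-algebra, used to form iterated tensor powers. -/
structure AlgB (R : Type u) [CommRing R] : Type (u + 1) where
  X : Type u
  [ring : Ring X]
  [alg : Algebra R X]

attribute [instance] AlgB.ring AlgB.alg

section Mach

variable (R H : Type u) [CommRing R] [Ring H] [Algebra R H]

/-- The `n`-th tensor power `H^{⊗ n}` (with `H^{⊗ 0} = R`, `H^{⊗ 1} = H`). -/
def Tpow : ℕ → AlgB R
  | 0 => ⟨R⟩
  | 1 => ⟨H⟩
  | n + 2 => ⟨H ⊗[R] (Tpow (n + 1)).X⟩

/-- Apply a linear endomorphism of `H` in each tensor slot. -/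
def tmap : (n : ℕ) → (Fin n → (H →ₗ[R] H)) → ((Tpow R H n).X →ₗ[R] (Tpow R H n).X)
  | 0, _ => LinearMap.id
  | 1, f => f 0
  | n + 2, f => TensorProduct.map (f 0) (tmap (n + 1) fun i => f i.succ)

/-- The iterated coproduct `Δⁿ : H → H^{⊗ n}`, with `Δ⁰ = ε`, `Δ¹ = id`. -/
def Dit (cu : H →ₗ[R] R) (cm : H →ₗ[R] H ⊗[R] H) : (n : ℕ) → H →ₗ[R] (Tpow R H n).X
  | 0 => cu
  | 1 => LinearMap.id
  | n + 2 => (TensorProduct.map LinearMap.id (Dit cu cm (n + 1))) ∘ₗ cm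

/-- `unit ∘ ε : H → H`. -/
def uem (cu : H →ₗ[R] R) : H →ₗ[R] H := (Algebra.linearMap R H) ∘ₗ cu

/-- `Δ_E : H → H^{⊗ n}`: the iterated coproduct inserted into the slots of `E`,
with units (`unit ∘ ε`) in the slots outside `E`. -/
def DeltaE (cu : H →ₗ[R] R) (cm : H →ₗ[R] H ⊗[R] H) (n : ℕ) (E : Finset (Fin n)) :
    H →ₗ[R] (Tpow R H n).X :=
  (tmap R H n fun i => if i ∈ E then LinearMap.id else uem R H cu) ∘ₗ Dit R H cu cm n

/-- `δ_E := Σ_{E' ⊆ E} (-1)^{|E| - |E'|} Δ_{E'}`. -/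
def deltaE (cu : H →ₗ[R] R) (cm : H →ₗ[R] H ⊗[R] H) (n : ℕ) (E : Finset (Fin n)) :
    H →ₗ[R] (Tpow R H n).X :=
  ∑ E' ∈ E.powerset, ((-1 : ℤ) ^ (E.card - E'.card)) • DeltaE R H cu cm n E'

end Mach


/-- Drinfeld's subset `H' = { a ∈ H | δ_n(a) ∈ tⁿ·H^{⊗n} for all n }`,
for a Hopf algebra `H` over `R` and a distinguished element `t ∈ R`. -/
def Hset (R H : Type u) [CommRing R] [Ring H] [Algebra R H]
    (cu : H →ₗ[R] R) (cm : H →ₗ[R] H ⊗[R] H) (t : R) : Set H :=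
  {a : H | ∀ n : ℕ, ∃ y : (Tpow R H n).X, deltaE R H cu cm n Finset.univ a = t ^ n • y}


open Finset

section Aux

variable {ι : Type*} [DecidableEq ι]

lemma st5_sum_powerset_filter_subset {M : Type*} [AddCommMonoid M] (E G : Finset ι)
    (hGE : G ⊆ E) (h : Finset ι → M) :
    (∑ F ∈ E.powerset, if G ⊆ F then h F else 0) = ∑ K ∈ (E \ G).powerset, h (G ∪ K) := by
  rw [← Finset.sum_filter]
  refine Finset.sum_nbij' (fun F => F \ G) (fun K => G ∪ K) ?_ ?_ ?_ ?_ ?_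
  · intro F hF
    simp only [mem_filter, mem_powerset] at hF
    exact mem_powerset.2 (sdiff_subset_sdiff hF.1 Subset.rfl)
  · intro K hK
    simp only [mem_powerset] at hK
    simp only [mem_filter, mem_powerset]
    exact ⟨union_subset hGE (hK.trans sdiff_subset), subset_union_left⟩
  · intro F hF
    simp only [mem_filter, mem_powerset] at hF
    exact union_sdiff_of_subset hF.2
  · intro K hK
    simp only [mem_powerset] at hK
    exact union_sdiff_cancel_left (disjoint_sdiff.mono_right hK)
  · intro F hF
    simp only [mem_filter, mem_powerset] at hF
    rw [union_sdiff_of_subset hF.2]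

lemma st5_coeff1 (E G : Finset ι) (hGE : G ⊆ E) :
    (∑ F ∈ E.powerset, if G ⊆ F then (-1 : ℤ) ^ (F.card - G.card) else 0)
      = if G = E then 1 else 0 := by
  rw [st5_sum_powerset_filter_subset _ _ hGE]
  have h1 : ∀ K ∈ (E \ G).powerset, (-1 : ℤ) ^ ((G ∪ K).card - G.card) = (-1) ^ K.card := by
    intro K hK
    rw [mem_powerset] at hK
    rw [card_union_of_disjoint (disjoint_sdiff.mono_right hK), Nat.add_sub_cancel_left]
  rw [Finset.sum_congr rfl h1, Finset.sum_powerset_neg_one_pow_card]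
  have : E \ G = ∅ ↔ G = E := by
    rw [sdiff_eq_empty_iff_subset]
    exact ⟨fun h => Subset.antisymm hGE h, fun h => h ▸ Subset.rfl⟩
  simp [this]

lemma st5_coeff2 (Φ S : Finset ι) (hS : S ⊆ Φ) :
    (∑ E ∈ Φ.powerset, if S ⊆ E then (-1 : ℤ) ^ (Φ.card - E.card) else 0)
      = if S = Φ then 1 else 0 := by
  rw [st5_sum_powerset_filter_subset _ _ hS]
  have h1 : ∀ K ∈ (Φ \ S).powerset,
      (-1 : ℤ) ^ (Φ.card - (S ∪ K).card) = (-1) ^ (Φ \ S).card * (-1) ^ K.card := by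
    intro K hK
    rw [mem_powerset] at hK
    have hd : Disjoint S K := disjoint_sdiff.mono_right hK
    have hk : K.card ≤ (Φ \ S).card := card_le_card hK
    rw [card_union_of_disjoint hd]
    have he : Φ.card - (S.card + K.card) = (Φ \ S).card - K.card := by
      rw [card_sdiff_of_subset hS, Nat.sub_sub]
    rw [he]
    have h2 : ((-1 : ℤ) ^ K.card) * ((-1) ^ K.card) = 1 := by
      rw [← pow_add, ← two_mul, pow_mul]; norm_num
    have h3 : (-1 : ℤ) ^ ((Φ \ S).card - K.card) * (-1) ^ K.card = (-1) ^ (Φ \ S).card := by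
      rw [← pow_add, Nat.sub_add_cancel hk]
    calc (-1 : ℤ) ^ ((Φ \ S).card - K.card)
        = (-1 : ℤ) ^ ((Φ \ S).card - K.card) * (((-1) ^ K.card) * ((-1) ^ K.card)) := by
          rw [h2, mul_one]
      _ = ((-1 : ℤ) ^ ((Φ \ S).card - K.card) * ((-1) ^ K.card)) * ((-1) ^ K.card) := by ring
      _ = (-1) ^ (Φ \ S).card * (-1) ^ K.card := by rw [h3]
  rw [Finset.sum_congr rfl h1, ← Finset.mul_sum, Finset.sum_powerset_neg_one_pow_card]
  have : Φ \ S = ∅ ↔ S = Φ := by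
    rw [sdiff_eq_empty_iff_subset]
    exact ⟨fun h => Subset.antisymm hS h, fun h => h ▸ Subset.rfl⟩
  by_cases h : S = Φ
  · simp [this, h]
  · simp [this, h]

lemma st5_sum_powerset_ext {M : Type*} [AddCommMonoid M] {E F2 : Finset ι} (hE : E ⊆ F2)
    (h : Finset ι → M) :
    ∑ x ∈ E.powerset, h x = ∑ x ∈ F2.powerset, if x ⊆ E then h x else 0 := by
  rw [← Finset.sum_filter]
  congr 1
  ext G
  simp only [mem_filter, mem_powerset]
  exact ⟨fun hh => ⟨hh.trans hE, hh⟩, fun hh => hh.2⟩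

lemma st5_sum_div {ι' R M : Type*} [CommRing R] [AddCommMonoid M] [Module R M]
    {s : Finset ι'} {f : ι' → M} (c : R) (h : ∀ i ∈ s, ∃ w, f i = c • w) :
    ∃ w, ∑ i ∈ s, f i = c • w := by
  choose w hw using h
  refine ⟨∑ i ∈ s.attach, w i i.2, ?_⟩
  rw [Finset.smul_sum, ← Finset.sum_attach s f]
  exact Finset.sum_congr rfl fun i _ => hw i i.2

lemma st5_powerset_map {α β : Type*} (f : α ↪ β) (s : Finset α) :
    (s.map f).powerset = s.powerset.map ⟨Finset.map f, Finset.map_injective f⟩ := by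
  classical
  ext t
  simp only [Finset.mem_powerset, Finset.mem_map, Function.Embedding.coeFn_mk]
  constructor
  · intro ht
    refine ⟨s.filter (fun a => f a ∈ t), Finset.filter_subset _ _, ?_⟩
    ext b
    simp only [Finset.mem_map, Finset.mem_filter]
    constructor
    · rintro ⟨a, ⟨_, hft⟩, rfl⟩; exact hft
    · intro hb
      obtain ⟨a, ha, rfl⟩ := Finset.mem_map.1 (ht hb)
      exact ⟨a, ⟨ha, hb⟩, rfl⟩
  · rintro ⟨u, hu, rfl⟩
    exact Finset.map_subset_map.2 hu

lemma st5_mobius {M : Type*} [AddCommGroup M] (E : Finset ι) (D : Finset ι → M) :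
    ∑ F ∈ E.powerset, ∑ G ∈ F.powerset, ((-1 : ℤ) ^ (F.card - G.card)) • D G = D E := by
  have step1 : ∀ F ∈ E.powerset,
      (∑ G ∈ F.powerset, ((-1 : ℤ) ^ (F.card - G.card)) • D G)
        = ∑ G ∈ E.powerset, if G ⊆ F then ((-1 : ℤ) ^ (F.card - G.card)) • D G else 0 := by
    intro F hF
    rw [mem_powerset] at hF
    rw [← Finset.sum_filter]
    congr 1
    ext G
    simp only [mem_filter, mem_powerset]
    exact ⟨fun h => ⟨h.trans hF, h⟩, fun h => h.2⟩
  rw [Finset.sum_congr rfl step1, Finset.sum_comm]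
  have step2 : ∀ G ∈ E.powerset,
      (∑ F ∈ E.powerset, if G ⊆ F then ((-1 : ℤ) ^ (F.card - G.card)) • D G else 0)
        = (if G = E then (1 : ℤ) else 0) • D G := by
    intro G hG
    rw [mem_powerset] at hG
    rw [← st5_coeff1 E G hG, Finset.sum_smul]
    refine Finset.sum_congr rfl fun F _ => ?_
    split <;> simp
  rw [Finset.sum_congr rfl step2]
  have : ∀ G ∈ E.powerset, (if G = E then (1 : ℤ) else 0) • D G
      = if G = E then D G else 0 := by
    intro G _; split <;> simp
  rw [Finset.sum_congr rfl this, Finset.sum_ite_eq' E.powerset E D,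
    if_pos (mem_powerset.2 Subset.rfl)]

end Aux

section Main

variable {R H : Type u} [CommRing R] [Ring H] [Bialgebra R H]

/-- `unit ∘ ε` as an algebra hom. -/
def uemA : H →ₐ[R] H := (Algebra.ofId R H).comp (Bialgebra.counitAlgHom R H)

lemma uemA_toLin : (uemA (R := R) (H := H)).toLinearMap = uem R H Coalgebra.counit := rfl

/-- `tmap` as an algebra hom. -/
def tmapA : (n : ℕ) → (Fin n → (H →ₐ[R] H)) → ((Tpow R H n).X →ₐ[R] (Tpow R H n).X)
  | 0, _ => AlgHom.id R R
  | 1, f => f 0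
  | n + 2, f => Algebra.TensorProduct.map (f 0) (tmapA (n + 1) fun i => f i.succ)

lemma tmapA_toLin : ∀ (n : ℕ) (f : Fin n → (H →ₐ[R] H)),
    (tmapA n f).toLinearMap = tmap R H n (fun i => (f i).toLinearMap)
  | 0, _ => rfl
  | 1, _ => rfl
  | n + 2, f => by
    show (Algebra.TensorProduct.map (f 0) (tmapA (n + 1) fun i => f i.succ)).toLinearMap
      = TensorProduct.map (f 0).toLinearMap (tmap R H (n + 1) fun i => (f i.succ).toLinearMap)
    rw [← tmapA_toLin]
    exact TensorProduct.ext' fun x y => rfl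

/-- `Dit` as an algebra hom. -/
def DitA : (n : ℕ) → H →ₐ[R] (Tpow R H n).X
  | 0 => Bialgebra.counitAlgHom R H
  | 1 => AlgHom.id R H
  | n + 2 => (Algebra.TensorProduct.map (AlgHom.id R H) (DitA (n + 1))).comp
      (Bialgebra.comulAlgHom R H)

lemma DitA_toLin : ∀ n : ℕ,
    (DitA (R := R) (H := H) n).toLinearMap = Dit R H Coalgebra.counit Coalgebra.comul n
  | 0 => rfl
  | 1 => rfl
  | n + 2 => by
    show ((Algebra.TensorProduct.map (AlgHom.id R H) (DitA (n + 1))).toLinearMap) ∘ₗ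
        Coalgebra.comul
      = (TensorProduct.map LinearMap.id (Dit R H Coalgebra.counit Coalgebra.comul (n + 1))) ∘ₗ
          Coalgebra.comul
    rw [← DitA_toLin]
    congr 1

/-- `DeltaE` as an algebra hom. -/
def DeltaEA (n : ℕ) (E : Finset (Fin n)) : H →ₐ[R] (Tpow R H n).X :=
  (tmapA n fun i => if i ∈ E then AlgHom.id R H else uemA).comp (DitA n)

lemma DeltaEA_toLin (n : ℕ) (E : Finset (Fin n)) :
    (DeltaEA (R := R) (H := H) n E).toLinearMap
      = DeltaE R H Coalgebra.counit Coalgebra.comul n E := by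
  show (tmapA n fun i => if i ∈ E then AlgHom.id R H else uemA).toLinearMap ∘ₗ
      (DitA n).toLinearMap = _
  rw [DitA_toLin, tmapA_toLin]
  unfold DeltaE
  congr 1
  congr 1
  funext i
  split <;> rfl

lemma DeltaE_apply_eq (n : ℕ) (E : Finset (Fin n)) (a : H) :
    DeltaE R H Coalgebra.counit Coalgebra.comul n E a = DeltaEA (R := R) n E a := by
  rw [← DeltaEA_toLin]; rfl

lemma DeltaE_mul (n : ℕ) (E : Finset (Fin n)) (a b : H) :
    DeltaE R H Coalgebra.counit Coalgebra.comul n E (a * b)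
      = DeltaE R H Coalgebra.counit Coalgebra.comul n E a
          * DeltaE R H Coalgebra.counit Coalgebra.comul n E b := by
  rw [DeltaE_apply_eq, DeltaE_apply_eq, DeltaE_apply_eq, map_mul]

lemma DeltaE_one (n : ℕ) (E : Finset (Fin n)) :
    DeltaE R H Coalgebra.counit Coalgebra.comul n E 1 = 1 := by
  rw [DeltaE_apply_eq, map_one]

/-- The map `H^{⊗n} → H^{⊗(n+1)}` inserting the unit `1` in slot `i`. -/
def Lins : (n : ℕ) → Fin (n + 1) → ((Tpow R H n).X →ₗ[R] (Tpow R H (n + 1)).X)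
  | 0, _ => Algebra.linearMap R H
  | 1, ⟨0, _⟩ => TensorProduct.mk R H H 1
  | 1, ⟨_ + 1, _⟩ => (TensorProduct.mk R H H).flip 1
  | n + 2, ⟨0, _⟩ => TensorProduct.mk R H (Tpow R H (n + 2)).X 1
  | n + 2, ⟨j + 1, h⟩ => LinearMap.lTensor H (Lins (n + 1) ⟨j, Nat.lt_of_succ_lt_succ h⟩)

lemma Lins_succ_zero (n : ℕ) :
    Lins (R := R) (H := H) (n + 1) 0 = TensorProduct.mk R H (Tpow R H (n + 1)).X 1 := by
  cases n <;> rfl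

lemma uem_rTensor_comul :
    (TensorProduct.map (uem R H Coalgebra.counit) LinearMap.id) ∘ₗ Coalgebra.comul
      = TensorProduct.mk R H H 1 := by
  have h1 : (TensorProduct.map (uem R H Coalgebra.counit) (LinearMap.id (M := H)))
      = (TensorProduct.map (Algebra.linearMap R H) LinearMap.id) ∘ₗ
        (TensorProduct.map Coalgebra.counit LinearMap.id) := by
    rw [← TensorProduct.map_comp, LinearMap.comp_id]; rfl
  have h2 : (TensorProduct.map (Coalgebra.counit (R := R) (A := H)) (LinearMap.id (M := H)))
      ∘ₗ Coalgebra.comul = TensorProduct.mk R R H 1 :=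
    Coalgebra.rTensor_counit_comp_comul
  rw [h1, LinearMap.comp_assoc, h2]
  ext x
  simp

lemma uem_lTensor_comul :
    (TensorProduct.map LinearMap.id (uem R H Coalgebra.counit)) ∘ₗ Coalgebra.comul
      = (TensorProduct.mk R H H).flip 1 := by
  have h1 : (TensorProduct.map (LinearMap.id (M := H)) (uem R H Coalgebra.counit))
      = (TensorProduct.map LinearMap.id (Algebra.linearMap R H)) ∘ₗ
        (TensorProduct.map LinearMap.id Coalgebra.counit) := by
    rw [← TensorProduct.map_comp, LinearMap.comp_id]; rfl
  have h2 : (TensorProduct.map (LinearMap.id (M := H)) (Coalgebra.counit (R := R) (A := H)))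
      ∘ₗ Coalgebra.comul = (TensorProduct.mk R H R).flip 1 :=
    Coalgebra.lTensor_counit_comp_comul
  rw [h1, LinearMap.comp_assoc, h2]
  ext x
  simp

lemma map_id_comp_mk {M N : Type u} [AddCommMonoid M] [AddCommMonoid N] [Module R M]
    [Module R N] (W : M →ₗ[R] N) :
    (TensorProduct.map (LinearMap.id (M := H)) W) ∘ₗ TensorProduct.mk R H M 1
      = TensorProduct.mk R H N 1 ∘ₗ W := by
  ext x
  simp

lemma map_id_comp_mkflip (W : H →ₗ[R] H) :
    (TensorProduct.map W (LinearMap.id (M := H))) ∘ₗ (TensorProduct.mk R H H).flip 1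
      = (TensorProduct.mk R H H).flip 1 ∘ₗ W := by
  ext x
  simp

theorem tmap_Dit_insert : ∀ (n : ℕ) (i : Fin (n + 1)) (g : Fin (n + 1) → (H →ₗ[R] H)),
    g i = uem R H Coalgebra.counit →
    tmap R H (n + 1) g ∘ₗ Dit R H Coalgebra.counit Coalgebra.comul (n + 1)
      = Lins n i ∘ₗ tmap R H n (g ∘ i.succAbove) ∘ₗ
          Dit R H Coalgebra.counit Coalgebra.comul n
  | 0, i, g, hg => by
    have hg0 : g 0 = uem R H Coalgebra.counit := by
      rwa [Subsingleton.elim (0 : Fin 1) i]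
    show g 0 ∘ₗ LinearMap.id
        = Algebra.linearMap R H ∘ₗ LinearMap.id ∘ₗ Coalgebra.counit
    rw [LinearMap.comp_id, LinearMap.id_comp, hg0]
    rfl
  | (n + 1), i, g, hg => by
    revert hg
    induction i using Fin.cases with
    | zero =>
      intro hg
      have e1 : tmap R H (n + 2) g
          = TensorProduct.map (g 0) (tmap R H (n + 1) fun k => g k.succ) := rfl
      have e2 : Dit R H Coalgebra.counit Coalgebra.comul (n + 2)
          = (TensorProduct.map LinearMap.id
              (Dit R H Coalgebra.counit Coalgebra.comul (n + 1))) ∘ₗ Coalgebra.comul := rfl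
      have e3 : g ∘ (0 : Fin (n + 2)).succAbove = fun k => g k.succ := by
        funext k; simp [Fin.zero_succAbove]
      rw [e1, e2, e3, Lins_succ_zero]
      show (TensorProduct.map (g 0) (tmap R H (n + 1) fun k => g k.succ) ∘ₗ
          ((TensorProduct.map LinearMap.id (Dit R H Coalgebra.counit Coalgebra.comul (n + 1))) ∘ₗ
            Coalgebra.comul) : H →ₗ[R] H ⊗[R] (Tpow R H (n + 1)).X)
        = (TensorProduct.mk R H (Tpow R H (n + 1)).X 1 ∘ₗ ((tmap R H (n + 1) fun k => g k.succ) ∘ₗ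
            Dit R H Coalgebra.counit Coalgebra.comul (n + 1)) : H →ₗ[R] H ⊗[R] (Tpow R H (n + 1)).X)
      rw [← LinearMap.comp_assoc, ← TensorProduct.map_comp,
        LinearMap.comp_id]
      set W := tmap R H (n + 1) (fun k => g k.succ) ∘ₗ
        Dit R H Coalgebra.counit Coalgebra.comul (n + 1) with hW
      have e4 : TensorProduct.map (g 0) W
          = TensorProduct.map LinearMap.id W ∘ₗ TensorProduct.map (g 0) LinearMap.id := by
        rw [← TensorProduct.map_comp, LinearMap.id_comp, LinearMap.comp_id]
      rw [e4, LinearMap.comp_assoc, hg, uem_rTensor_comul, map_id_comp_mk]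
    | succ j =>
      intro hg
      match n, j with
      | 0, j =>
        have hj : j = 0 := by have := j.isLt; ext; omega
        subst hj
        have hg1 : g (0 : Fin 1).succ = uem R H Coalgebra.counit := hg
        have e1 : tmap R H 2 g = TensorProduct.map (g 0) (g (0 : Fin 1).succ) := rfl
        have e2 : Dit R H Coalgebra.counit Coalgebra.comul 2 = Coalgebra.comul := by
          show (TensorProduct.map LinearMap.id LinearMap.id) ∘ₗ Coalgebra.comul = _
          rw [TensorProduct.map_id, LinearMap.id_comp]
        have e3 : tmap R H 1 (g ∘ ((0 : Fin 1).succ).succAbove) = g 0 := by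
          show g (((0 : Fin 1).succ).succAbove 0) = g 0
          congr 1
        have e4 : Lins (R := R) (H := H) 1 (0 : Fin 1).succ
            = (TensorProduct.mk R H H).flip 1 := rfl
        have e5 : TensorProduct.map (g 0) (uem R H Coalgebra.counit)
            = TensorProduct.map (g 0) LinearMap.id ∘ₗ
                TensorProduct.map LinearMap.id (uem R H Coalgebra.counit) := by
          rw [← TensorProduct.map_comp, LinearMap.id_comp, LinearMap.comp_id]
        rw [e1, e2, e3, e4, hg1]
        show (TensorProduct.map (g 0) (uem R H Coalgebra.counit) ∘ₗ Coalgebra.comul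
            : H →ₗ[R] H ⊗[R] H)
          = ((TensorProduct.mk R H H).flip 1 ∘ₗ
            (g 0 ∘ₗ Dit R H Coalgebra.counit Coalgebra.comul (0 + 1)) : H →ₗ[R] H ⊗[R] H)
        rw [e5, LinearMap.comp_assoc, uem_lTensor_comul,
          map_id_comp_mkflip]
        show _ = (TensorProduct.mk R H H).flip 1 ∘ₗ (g 0 ∘ₗ LinearMap.id)
        rw [LinearMap.comp_id]
      | (m + 1), j =>
        have IH := tmap_Dit_insert (m + 1) j (fun k => g k.succ) hg
        have e1 : tmap R H (m + 3) g
            = TensorProduct.map (g 0) (tmap R H (m + 2) fun k => g k.succ) := rfl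
        have e2 : Dit R H Coalgebra.counit Coalgebra.comul (m + 3)
            = (TensorProduct.map LinearMap.id
                (Dit R H Coalgebra.counit Coalgebra.comul (m + 2))) ∘ₗ Coalgebra.comul := rfl
        rw [e1, e2]
        show (TensorProduct.map (g 0) (tmap R H (m + 2) fun k => g k.succ) ∘ₗ
            ((TensorProduct.map LinearMap.id (Dit R H Coalgebra.counit Coalgebra.comul (m + 2))) ∘ₗ
              Coalgebra.comul) : H →ₗ[R] H ⊗[R] (Tpow R H (m + 2)).X) = _
        rw [← LinearMap.comp_assoc, ← TensorProduct.map_comp, LinearMap.comp_id, IH]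
        have e3 : Lins (R := R) (H := H) (m + 2) j.succ
            = TensorProduct.map LinearMap.id (Lins (m + 1) j) := rfl
        have e4 : tmap R H (m + 2) (g ∘ (j.succ).succAbove)
            = TensorProduct.map (g 0)
                (tmap R H (m + 1) ((fun k => g k.succ) ∘ j.succAbove)) := by
          have h0 : (g ∘ (j.succ).succAbove) 0 = g 0 := by
            simp [Fin.succ_succAbove_zero]
          have hsucc : (fun k : Fin (m + 1) => (g ∘ (j.succ).succAbove) k.succ)
              = (fun k => g k.succ) ∘ j.succAbove := by
            funext k
            simp [Fin.succ_succAbove_succ]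
          show TensorProduct.map ((g ∘ (j.succ).succAbove) 0)
              (tmap R H (m + 1) fun k => (g ∘ (j.succ).succAbove) k.succ) = _
          rw [h0, hsucc]
        have e5 : Dit R H Coalgebra.counit Coalgebra.comul (m + 2)
            = (TensorProduct.map LinearMap.id
                (Dit R H Coalgebra.counit Coalgebra.comul (m + 1))) ∘ₗ Coalgebra.comul := rfl
        rw [e3, e4, e5]
        show (TensorProduct.map (g 0) (Lins (m + 1) j ∘ₗ
            tmap R H (m + 1) ((fun k => g k.succ) ∘ j.succAbove) ∘ₗ
              Dit R H Coalgebra.counit Coalgebra.comul (m + 1)) ∘ₗ Coalgebra.comul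
            : H →ₗ[R] H ⊗[R] (Tpow R H (m + 2)).X)
          = (TensorProduct.map LinearMap.id (Lins (m + 1) j) ∘ₗ
            (TensorProduct.map (g 0) (tmap R H (m + 1) ((fun k => g k.succ) ∘ j.succAbove)) ∘ₗ
              (TensorProduct.map LinearMap.id (Dit R H Coalgebra.counit Coalgebra.comul (m + 1)) ∘ₗ
                Coalgebra.comul)) : H →ₗ[R] H ⊗[R] (Tpow R H (m + 2)).X)
        set V := tmap R H (m + 1) ((fun k => g k.succ) ∘ j.succAbove) ∘ₗ
          Dit R H Coalgebra.counit Coalgebra.comul (m + 1) with hV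
        have e6 : TensorProduct.map (g 0) (Lins (R := R) (H := H) (m + 1) j ∘ₗ V)
            = TensorProduct.map LinearMap.id (Lins (m + 1) j) ∘ₗ TensorProduct.map (g 0) V := by
          rw [← TensorProduct.map_comp, LinearMap.id_comp]
        have e7 : TensorProduct.map (g 0)
              (tmap R H (m + 1) ((fun k => g k.succ) ∘ j.succAbove)) ∘ₗ
            ((TensorProduct.map LinearMap.id
              (Dit R H Coalgebra.counit Coalgebra.comul (m + 1))) ∘ₗ Coalgebra.comul)
            = TensorProduct.map (g 0) V ∘ₗ Coalgebra.comul := by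
          rw [← LinearMap.comp_assoc, ← TensorProduct.map_comp, LinearMap.comp_id, hV]
        rw [e6, LinearMap.comp_assoc, e7]


lemma DeltaE_insertMap (n : ℕ) (i : Fin (n + 1)) (F : Finset (Fin n)) :
    DeltaE R H Coalgebra.counit Coalgebra.comul (n + 1) (F.map i.succAboveEmb)
      = Lins n i ∘ₗ DeltaE R H Coalgebra.counit Coalgebra.comul n F := by
  unfold DeltaE
  have hni : i ∉ F.map i.succAboveEmb := by
    intro hmem
    obtain ⟨j, _, hj⟩ := Finset.mem_map.1 hmem
    exact Fin.succAbove_ne i j hj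
  have hgi : (fun k => if k ∈ F.map i.succAboveEmb then LinearMap.id
      else uem R H Coalgebra.counit) i = uem R H Coalgebra.counit := by
    simp [hni]
  have hfun : ((fun k => if k ∈ F.map i.succAboveEmb then LinearMap.id
        else uem R H Coalgebra.counit) ∘ i.succAbove)
      = fun j => if j ∈ F then LinearMap.id else uem R H Coalgebra.counit := by
    funext k
    have hk : (i.succAbove k ∈ F.map i.succAboveEmb) ↔ (k ∈ F) := by
      constructor
      · intro hmem
        obtain ⟨j, hjF, hj⟩ := Finset.mem_map.1 hmem
        have hjk : j = k := Fin.succAbove_right_injective hj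
        exact hjk ▸ hjF
      · intro hkF
        exact Finset.mem_map.2 ⟨k, hkF, rfl⟩
    by_cases h : k ∈ F
    · simp only [Function.comp_apply, if_pos (hk.2 h), if_pos h]
    · simp only [Function.comp_apply, if_neg (fun hc => h (hk.1 hc)), if_neg h]
  rw [tmap_Dit_insert n i _ hgi, hfun]

lemma deltaE_insertMap (n : ℕ) (i : Fin (n + 1)) (F : Finset (Fin n)) (a : H) :
    deltaE R H Coalgebra.counit Coalgebra.comul (n + 1) (F.map i.succAboveEmb) a
      = Lins n i (deltaE R H Coalgebra.counit Coalgebra.comul n F a) := by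
  unfold deltaE
  rw [st5_powerset_map, Finset.sum_map]
  simp only [LinearMap.sum_apply, LinearMap.smul_apply, Function.Embedding.coeFn_mk,
    Finset.card_map, DeltaE_insertMap, LinearMap.comp_apply, map_sum, map_zsmul]

lemma st5_delta_div {t : R} {a : H}
    (ha : a ∈ Hset R H Coalgebra.counit Coalgebra.comul t) :
    ∀ (n : ℕ) (E : Finset (Fin n)),
      ∃ y, deltaE R H Coalgebra.counit Coalgebra.comul n E a = t ^ E.card • y := by
  intro n
  induction n with
  | zero =>
    intro E
    have hE : E = Finset.univ := by ext x; exact x.elim0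
    subst hE
    obtain ⟨y, hy⟩ := ha 0
    exact ⟨y, by rw [Finset.card_fin]; exact hy⟩
  | succ m IH =>
    intro E
    by_cases hE : E = Finset.univ
    · subst hE
      obtain ⟨y, hy⟩ := ha (m + 1)
      exact ⟨y, by rw [Finset.card_fin]; exact hy⟩
    · have hex : ∃ i : Fin (m + 1), i ∉ E := by
        by_contra hcon
        push_neg at hcon
        exact hE (Finset.eq_univ_iff_forall.2 hcon)
      obtain ⟨i, hi⟩ := hex
      set F : Finset (Fin m) := Finset.univ.filter (fun j => i.succAbove j ∈ E) with hF
      have hEF : E = F.map i.succAboveEmb := by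
        ext k
        simp only [hF, Finset.mem_map, Finset.mem_filter, Finset.mem_univ, true_and,
          Fin.succAboveEmb, Function.Embedding.coeFn_mk]
        constructor
        · intro hk
          obtain ⟨j, hj⟩ := Fin.exists_succAbove_eq
            (show k ≠ i from fun hh => hi (hh ▸ hk))
          exact ⟨j, hj ▸ hk, hj⟩
        · rintro ⟨j, hj, rfl⟩
          exact hj
      obtain ⟨y, hy⟩ := IH F
      refine ⟨Lins m i y, ?_⟩
      rw [hEF, deltaE_insertMap, hy, map_smul, Finset.card_map]

lemma st5_deltaE_mul (n : ℕ) (Φ : Finset (Fin n)) (a b : H) :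
    deltaE R H Coalgebra.counit Coalgebra.comul n Φ (a * b)
      = ∑ Λ ∈ Φ.powerset, ∑ Y ∈ Φ.powerset,
          (if Λ ∪ Y = Φ then (1 : ℤ) else 0) •
            (deltaE R H Coalgebra.counit Coalgebra.comul n Λ a *
              deltaE R H Coalgebra.counit Coalgebra.comul n Y b) := by
  classical
  have hdD : ∀ (E : Finset (Fin n)) (x : H),
      deltaE R H Coalgebra.counit Coalgebra.comul n E x
        = ∑ G ∈ E.powerset, ((-1 : ℤ) ^ (E.card - G.card)) •
            DeltaE R H Coalgebra.counit Coalgebra.comul n G x := by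
    intro E x
    simp [deltaE, LinearMap.sum_apply, LinearMap.smul_apply]
  have hmob : ∀ (E : Finset (Fin n)) (x : H),
      ∑ F ∈ E.powerset, deltaE R H Coalgebra.counit Coalgebra.comul n F x
        = DeltaE R H Coalgebra.counit Coalgebra.comul n E x := by
    intro E x
    calc ∑ F ∈ E.powerset, deltaE R H Coalgebra.counit Coalgebra.comul n F x
        = ∑ F ∈ E.powerset, ∑ G ∈ F.powerset, ((-1 : ℤ) ^ (F.card - G.card)) •
            DeltaE R H Coalgebra.counit Coalgebra.comul n G x :=
          Finset.sum_congr rfl fun F _ => hdD F x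
      _ = _ := st5_mobius E _
  have key : ∀ E ∈ Φ.powerset,
      DeltaE R H Coalgebra.counit Coalgebra.comul n E (a * b)
        = ∑ Λ ∈ Φ.powerset, ∑ Y ∈ Φ.powerset,
            if Λ ⊆ E ∧ Y ⊆ E then
              (deltaE R H Coalgebra.counit Coalgebra.comul n Λ a *
                deltaE R H Coalgebra.counit Coalgebra.comul n Y b) else 0 := by
    intro E hE
    rw [Finset.mem_powerset] at hE
    rw [DeltaE_mul, ← hmob E a, ← hmob E b, Finset.sum_mul_sum,
      st5_sum_powerset_ext hE]
    refine Finset.sum_congr rfl fun Λ _ => ?_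
    by_cases hΛ : Λ ⊆ E
    · rw [if_pos hΛ, st5_sum_powerset_ext hE]
      refine Finset.sum_congr rfl fun Y _ => ?_
      by_cases hY : Y ⊆ E
      · rw [if_pos hY, if_pos ⟨hΛ, hY⟩]
      · rw [if_neg hY, if_neg (fun hc => hY hc.2)]
    · rw [if_neg hΛ]
      symm
      refine Finset.sum_eq_zero fun Y _ => ?_
      rw [if_neg (fun hc => hΛ hc.1)]
  calc deltaE R H Coalgebra.counit Coalgebra.comul n Φ (a * b)
      = ∑ E ∈ Φ.powerset, ((-1 : ℤ) ^ (Φ.card - E.card)) •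
          DeltaE R H Coalgebra.counit Coalgebra.comul n E (a * b) := hdD Φ _
    _ = ∑ E ∈ Φ.powerset, ∑ Λ ∈ Φ.powerset, ∑ Y ∈ Φ.powerset,
          ((-1 : ℤ) ^ (Φ.card - E.card)) •
            (if Λ ⊆ E ∧ Y ⊆ E then
              (deltaE R H Coalgebra.counit Coalgebra.comul n Λ a *
                deltaE R H Coalgebra.counit Coalgebra.comul n Y b) else 0) := by
        refine Finset.sum_congr rfl fun E hE => ?_
        rw [key E hE, Finset.smul_sum]
        exact Finset.sum_congr rfl fun Λ _ => Finset.smul_sum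
    _ = ∑ Λ ∈ Φ.powerset, ∑ Y ∈ Φ.powerset, ∑ E ∈ Φ.powerset,
          ((-1 : ℤ) ^ (Φ.card - E.card)) •
            (if Λ ⊆ E ∧ Y ⊆ E then
              (deltaE R H Coalgebra.counit Coalgebra.comul n Λ a *
                deltaE R H Coalgebra.counit Coalgebra.comul n Y b) else 0) := by
        rw [Finset.sum_comm]
        exact Finset.sum_congr rfl fun Λ _ => Finset.sum_comm
    _ = ∑ Λ ∈ Φ.powerset, ∑ Y ∈ Φ.powerset,
          (if Λ ∪ Y = Φ then (1 : ℤ) else 0) •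
            (deltaE R H Coalgebra.counit Coalgebra.comul n Λ a *
              deltaE R H Coalgebra.counit Coalgebra.comul n Y b) := by
        refine Finset.sum_congr rfl fun Λ hΛ => Finset.sum_congr rfl fun Y hY => ?_
        rw [Finset.mem_powerset] at hΛ hY
        have hsub : Λ ∪ Y ⊆ Φ := Finset.union_subset hΛ hY
        have h1 : ∀ E : Finset (Fin n), ((-1 : ℤ) ^ (Φ.card - E.card)) •
            (if Λ ⊆ E ∧ Y ⊆ E then
              (deltaE R H Coalgebra.counit Coalgebra.comul n Λ a *
                deltaE R H Coalgebra.counit Coalgebra.comul n Y b) else 0)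
            = (if Λ ∪ Y ⊆ E then ((-1 : ℤ) ^ (Φ.card - E.card)) else 0) •
              (deltaE R H Coalgebra.counit Coalgebra.comul n Λ a *
                deltaE R H Coalgebra.counit Coalgebra.comul n Y b) := by
          intro E
          by_cases h : Λ ∪ Y ⊆ E
          · rw [if_pos h, if_pos (Finset.union_subset_iff.1 h)]
          · rw [if_neg h, if_neg (fun hc => h (Finset.union_subset hc.1 hc.2)),
              smul_zero, zero_smul]
        rw [Finset.sum_congr rfl fun E _ => h1 E, ← Finset.sum_smul,
          st5_coeff2 Φ (Λ ∪ Y) hsub]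

lemma st5_one_mem (t : R) : (1 : H) ∈ Hset R H Coalgebra.counit Coalgebra.comul t := by
  intro n
  have h1 : deltaE R H Coalgebra.counit Coalgebra.comul n Finset.univ (1 : H)
      = (∑ F ∈ (Finset.univ : Finset (Fin n)).powerset,
          (-1 : ℤ) ^ ((Finset.univ : Finset (Fin n)).card - F.card)) •
            (1 : (Tpow R H n).X) := by
    simp only [deltaE, LinearMap.sum_apply, LinearMap.smul_apply, DeltaE_one]
    rw [← Finset.sum_smul]
  cases n with
  | zero =>
    refine ⟨1, ?_⟩
    rw [h1]
    simp
  | succ m =>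
    refine ⟨0, ?_⟩
    rw [h1, smul_zero]
    have hc : (∑ F ∈ (Finset.univ : Finset (Fin (m + 1))).powerset,
        (-1 : ℤ) ^ ((Finset.univ : Finset (Fin (m + 1))).card - F.card)) = 0 := by
      have h2 := st5_coeff2 (Finset.univ : Finset (Fin (m + 1))) ∅ (Finset.empty_subset _)
      simp only [Finset.empty_subset, if_true] at h2
      rw [if_neg (fun hh => Finset.univ_nonempty.ne_empty hh.symm)] at h2
      exact h2
    rw [hc, zero_smul]

lemma st5_mul_mem (t : R) {a b : H} (ha : a ∈ Hset R H Coalgebra.counit Coalgebra.comul t)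
    (hb : b ∈ Hset R H Coalgebra.counit Coalgebra.comul t) :
    a * b ∈ Hset R H Coalgebra.counit Coalgebra.comul t := by
  intro n
  rw [st5_deltaE_mul n Finset.univ a b]
  refine st5_sum_div (t ^ n) fun Λ hΛ => st5_sum_div (t ^ n) fun Y hY => ?_
  by_cases h : Λ ∪ Y = Finset.univ
  · obtain ⟨u, hu⟩ := st5_delta_div ha n Λ
    obtain ⟨v, hv⟩ := st5_delta_div hb n Y
    have hcard : n ≤ Λ.card + Y.card := by
      have h1 : (Λ ∪ Y).card ≤ Λ.card + Y.card := Finset.card_union_le _ _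
      rw [h, Finset.card_fin] at h1
      exact h1
    refine ⟨t ^ (Λ.card + Y.card - n) • (u * v), ?_⟩
    rw [if_pos h, one_smul, hu, hv, smul_mul_smul_comm, ← pow_add, smul_smul, ← pow_add,
      Nat.add_sub_cancel' hcard]
  · exact ⟨0, by rw [if_neg h, zero_smul, smul_zero]⟩

lemma st5_add_mem (t : R) {a b : H} (ha : a ∈ Hset R H Coalgebra.counit Coalgebra.comul t)
    (hb : b ∈ Hset R H Coalgebra.counit Coalgebra.comul t) :
    a + b ∈ Hset R H Coalgebra.counit Coalgebra.comul t := by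
  intro n
  obtain ⟨y, hy⟩ := ha n
  obtain ⟨z, hz⟩ := hb n
  exact ⟨y + z, by rw [map_add, hy, hz, smul_add]⟩

lemma st5_zero_mem (t : R) : (0 : H) ∈ Hset R H Coalgebra.counit Coalgebra.comul t :=
  fun _ => ⟨0, by rw [map_zero, smul_zero]⟩

lemma st5_smul_mem (t : R) (r : R) {a : H}
    (ha : a ∈ Hset R H Coalgebra.counit Coalgebra.comul t) :
    r • a ∈ Hset R H Coalgebra.counit Coalgebra.comul t := by
  intro n
  obtain ⟨y, hy⟩ := ha n
  exact ⟨r • y, by rw [map_smul, hy, smul_comm]⟩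

lemma st5_algebraMap_mem (t : R) (r : R) :
    algebraMap R H r ∈ Hset R H Coalgebra.counit Coalgebra.comul t := by
  have h : algebraMap R H r = r • (1 : H) := Algebra.algebraMap_eq_smul_one r
  rw [h]
  exact st5_smul_mem t r (st5_one_mem t)

end Main

/-- for a topologically free Hopf `k[[h]]`-algebra `H`
(h-torsionless, h-adically separated and complete), `H'` is a
`k[[h]]`-subalgebra of `H` (in particular it contains `1`). -/
theorem statement5 (k : Type) [Field k] (H : Type) [Ring H]
    [HopfAlgebra (PowerSeries k) H]
    (htf : ∀ a : H, (PowerSeries.X : PowerSeries k) • a = 0 → a = 0)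
    [IsAdicComplete (Ideal.span {(PowerSeries.X : PowerSeries k)}) H] :
    ∃ S : Subalgebra (PowerSeries k) H,
      (S : Set H) =
        Hset (PowerSeries k) H Coalgebra.counit Coalgebra.comul PowerSeries.X := by
  refine ⟨{
    carrier := Hset (PowerSeries k) H Coalgebra.counit Coalgebra.comul PowerSeries.X
    mul_mem' := fun ha hb => st5_mul_mem _ ha hb
    one_mem' := st5_one_mem _
    add_mem' := fun ha hb => st5_add_mem _ ha hb
    zero_mem' := st5_zero_mem _
    algebraMap_mem' := st5_algebraMap_mem _ }, rfl⟩

end
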